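/- arXiv:2006.01986 — 3 statements merged into one kernel-verified Lean document; each statement's English description precedes it below -/
import Mathlib

section
/- For all p ≥ 1 and all t with 0 ≤ t ≤ 1/2, one has (1 - t²)^{-p/2} - 1 ≤ (2^p · p / 3^{p/2}) · t². -/
open Real

theorem stmt2 (p t : ℝ) (hp : 1 ≤ p) (ht0 : 0 ≤ t) (ht : t ≤ 1 / 2) :
    (1 - t ^ 2) ^ (-(p / 2)) - 1 ≤ 2 ^ p * p / 3 ^ (p / 2) * t ^ 2 := by
  have hp0 : (0:ℝ) ≤ p := by linarith
  set x := t ^ 2 with hxdef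
  have hx0 : 0 ≤ x := sq_nonneg t
  have hx : x ≤ 1 / 4 := by nlinarith
  have h1x : (3:ℝ)/4 ≤ 1 - x := by linarith
  have h1xpos : (0:ℝ) < 1 - x := by linarith
  set y := (1 - x) ^ (-(1/2) : ℝ) with hydef
  have hypos : 0 < y := rpow_pos_of_pos h1xpos _
  -- y ≥ 1
  have hy1 : 1 ≤ y := by
    have := Real.rpow_le_rpow_of_nonpos h1xpos (by linarith : 1 - x ≤ 1)
      (by norm_num : (-(1/2):ℝ) ≤ 0)
    simpa [hydef] using this
  -- y ^ 2 = (1 - x)⁻¹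
  have hysq : y ^ 2 = (1 - x)⁻¹ := by
    rw [hydef, ← Real.rpow_natCast ((1-x) ^ (-(1/2):ℝ)) 2, ← Real.rpow_mul h1xpos.le]
    norm_num [Real.rpow_neg_one]
  -- y - 1 ≤ (2/3) * x
  have hy2 : y ^ 2 - 1 ≤ (4/3) * x := by
    rw [hysq]
    have hcinv : (1 - x)⁻¹ ≤ 4/3 := by
      rw [inv_le_comm₀ h1xpos (by norm_num)]
      linarith
    nlinarith [mul_inv_cancel₀ h1xpos.ne']
  have hylin : y - 1 ≤ (2/3) * x := by nlinarith [sq_nonneg (y - 1)]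
  -- y ≤ 2 / sqrt 3
  have hs3 : (0:ℝ) < Real.sqrt 3 := Real.sqrt_pos.mpr (by norm_num)
  have hsq4 : Real.sqrt 4 = 2 := by
    rw [show (4:ℝ) = 2^2 by norm_num, Real.sqrt_sq (by norm_num : (0:ℝ) ≤ 2)]
  have hyub : y ≤ 2 / Real.sqrt 3 := by
    have h34 : ((3:ℝ)/4) ^ (-(1/2):ℝ) = 2 / Real.sqrt 3 := by
      rw [Real.rpow_neg (by norm_num), ← Real.sqrt_eq_rpow,
        Real.sqrt_div (by norm_num : (0:ℝ) ≤ 3), hsq4, inv_div]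
    calc y ≤ ((3:ℝ)/4) ^ (-(1/2):ℝ) :=
          Real.rpow_le_rpow_of_nonpos (by norm_num) h1x (by norm_num)
      _ = 2 / Real.sqrt 3 := h34
  -- rewrite LHS as y ^ p
  have hyp : (1 - x) ^ (-(p / 2)) = y ^ p := by
    rw [hydef, ← Real.rpow_mul h1xpos.le]
    ring_nf
  -- Bernoulli: y^p - 1 ≤ p * y^p * (y - 1)
  have hbern : y ^ p - 1 ≤ p * y ^ p * (y - 1) := by
    have hs : (-1:ℝ) ≤ 1 / y - 1 := by
      have : 0 < 1 / y := by positivity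
      linarith
    have h := one_add_mul_self_le_rpow_one_add hs hp
    have h1 : (1 + (1 / y - 1)) ^ p = y ^ (-p) := by
      rw [show 1 + (1 / y - 1) = y⁻¹ by ring, ← Real.rpow_neg_one y,
        ← Real.rpow_mul hypos.le]
      ring_nf
    rw [h1, Real.rpow_neg hypos.le] at h
    have hyppos : 0 < y ^ p := rpow_pos_of_pos hypos p
    have h2 := mul_le_mul_of_nonneg_left h hyppos.le
    rw [mul_inv_cancel₀ hyppos.ne'] at h2
    have hu : 1 - 1/y ≤ y - 1 := by
      have expand : y + 1/y - 2 = (y-1)^2 / y := by field_simp; ring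
      have hpos : (0:ℝ) ≤ (y-1)^2 / y := by positivity
      linarith
    have h3 := mul_le_mul_of_nonneg_left hu (mul_nonneg hp0 hyppos.le)
    nlinarith [h2, h3]
  -- y^p ≤ (2/√3)^p = 2^p / 3^(p/2)
  have hypub : y ^ p ≤ 2 ^ p / 3 ^ (p / 2) := by
    have h1 : y ^ p ≤ (2 / Real.sqrt 3) ^ p :=
      Real.rpow_le_rpow hypos.le hyub hp0
    have h2 : ((2:ℝ) / Real.sqrt 3) ^ p = 2 ^ p / 3 ^ (p/2) := by
      rw [Real.div_rpow (by norm_num) hs3.le, Real.sqrt_eq_rpow,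
        ← Real.rpow_mul (by norm_num : (0:ℝ) ≤ 3), one_div, inv_mul_eq_div]
    linarith [h1, h2.le]
  -- combine
  rw [hyp]
  have hc : (0:ℝ) < 2 ^ p / 3 ^ (p/2) := by positivity
  have h1 : p * y ^ p * (y - 1) ≤ p * (2 ^ p / 3 ^ (p/2)) * ((2/3) * x) := by
    have hy1' : 0 ≤ y - 1 := by linarith
    apply mul_le_mul
    · exact mul_le_mul_of_nonneg_left hypub hp0
    · exact hylin
    · exact hy1'
    · positivity
  have hZ : 0 ≤ 2 ^ p * p / 3 ^ (p/2) * x := by positivity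
  calc y ^ p - 1 ≤ p * y ^ p * (y - 1) := hbern
    _ ≤ p * (2 ^ p / 3 ^ (p/2)) * ((2/3) * x) := h1
    _ ≤ 2 ^ p * p / 3 ^ (p / 2) * x := by
        have heq : p * (2 ^ p / 3 ^ (p/2)) * ((2/3) * x) = (2/3) * (2 ^ p * p / 3 ^ (p/2) * x) := by ring
        rw [heq]; linarith
end

section
/- Let Z₁,...,Zₙ be i.i.d. with E Z² = 1 and let ζ := inf{a > 0 : E(Z²·1{|Z| ≤ a}) ≥ 1/2} < ∞. Then P(Σᵢ Zᵢ² ≤ n/4) ≤ exp(-n / (32(ζ² + ζ/12))). -/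
open MeasureTheory ProbabilityTheory Real Finset

lemma exp_neg_le_quad {y : ℝ} (hy : 0 ≤ y) : Real.exp (-y) ≤ 1 - y + y ^ 2 / 2 := by
  have h3 := Real.sum_le_exp_of_nonneg hy 3
  have hsum : ∑ i ∈ Finset.range 3, y ^ i / (i.factorial : ℝ) = 1 + y + y ^ 2 / 2 := by
    simp [Finset.sum_range_succ, Nat.factorial]
  rw [hsum] at h3
  have hm : Real.exp (-y) * Real.exp y = 1 := by
    rw [← Real.exp_add]; simp
  nlinarith [Real.exp_pos y, Real.exp_pos (-y), sq_nonneg y, sq_nonneg (y - 1)]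

set_option maxHeartbeats 1000000 in
theorem stmt6 {Ω : Type*} [MeasureSpace Ω] [IsProbabilityMeasure (ℙ : Measure Ω)]
    {n : ℕ} (hn : 0 < n) (Z : Fin n → Ω → ℝ)
    (hmeas : ∀ i, Measurable (Z i))
    (hindep : iIndepFun Z ℙ)
    (hident : ∀ i, Measure.map (Z i) ℙ = Measure.map (Z ⟨0, hn⟩) ℙ)
    (hmom : ∫ ω, (Z ⟨0, hn⟩ ω) ^ 2 ∂ℙ = 1)
    (hL2 : MemLp (Z ⟨0, hn⟩) 2 ℙ)
    (S : Set ℝ)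
    (hS : S = {a : ℝ | 0 < a ∧
      (1 : ℝ) / 2 ≤ ∫ ω in {ω | |Z ⟨0, hn⟩ ω| ≤ a}, (Z ⟨0, hn⟩ ω) ^ 2 ∂ℙ})
    (hne : S.Nonempty) (ζ : ℝ) (hζ : ζ = sInf S) :
    ℙ {ω | ∑ i, (Z i ω) ^ 2 ≤ (n : ℝ) / 4} ≤
      ENNReal.ofReal (Real.exp (-(n : ℝ) / (32 * (ζ ^ 2 + ζ / 12)))) := by
  classical
  have hζnn : 0 ≤ ζ := by
    rw [hζ]
    exact le_csInf hne (fun a ha => by rw [hS] at ha; exact ha.1.le)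
  rcases eq_or_lt_of_le hζnn with hζ0 | hζpos
  · -- ζ = 0 : RHS is exp(-n/0) = exp 0 = 1
    rw [← hζ0]
    norm_num
    exact prob_le_one
  -- notation
  set Z0 : Ω → ℝ := Z ⟨0, hn⟩ with hZ0def
  have hZ0m : Measurable Z0 := hmeas _
  have hsq : Integrable (fun ω => Z0 ω ^ 2) ℙ := hL2.integrable_sq
  -- Step A: every a > ζ is "good"
  have hupper : ∀ a : ℝ, ζ < a →
      (1 : ℝ) / 2 ≤ ∫ ω in {ω | |Z0 ω| ≤ a}, Z0 ω ^ 2 ∂ℙ := by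
    intro a ha
    rw [hζ] at ha
    obtain ⟨s, hsS, hsa⟩ := exists_lt_of_csInf_lt hne ha
    rw [hS] at hsS
    refine hsS.2.trans (setIntegral_mono_set hsq.integrableOn
      (Filter.Eventually.of_forall fun ω => sq_nonneg _) ?_)
    exact (Filter.Eventually.of_forall fun ω hω => le_trans hω hsa.le : _)
  -- Step A': pass to the limit a ↓ ζ
  have hkey : (1 : ℝ) / 2 ≤ ∫ ω in {ω | |Z0 ω| ≤ ζ}, Z0 ω ^ 2 ∂ℙ := by
    have hsm : ∀ k : ℕ, MeasurableSet {ω | |Z0 ω| ≤ ζ + 1 / (k + 1)} :=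
      fun k => measurableSet_le hZ0m.abs measurable_const
    have hanti : Antitone (fun k : ℕ => {ω | |Z0 ω| ≤ ζ + 1 / ((k : ℝ) + 1)}) := by
      intro i j hij ω hω
      simp only [Set.mem_setOf_eq] at *
      have : (1 : ℝ) / ((j : ℝ) + 1) ≤ 1 / ((i : ℝ) + 1) := by
        apply one_div_le_one_div_of_le <;> [positivity; exact_mod_cast by omega]
      linarith
    have htend := tendsto_setIntegral_of_antitone (μ := ℙ)
      (f := fun ω => Z0 ω ^ 2) hsm hanti ⟨0, hsq.integrableOn⟩
    have hInter : (⋂ k : ℕ, {ω | |Z0 ω| ≤ ζ + 1 / ((k : ℝ) + 1)}) =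
        {ω | |Z0 ω| ≤ ζ} := by
      ext ω
      simp only [Set.mem_iInter, Set.mem_setOf_eq]
      constructor
      · intro h
        by_contra hc
        push_neg at hc
        obtain ⟨k, hk⟩ := exists_nat_one_div_lt (sub_pos.mpr hc)
        exact absurd (h k) (by push_neg; linarith)
      · intro h k
        have : (0 : ℝ) < 1 / ((k : ℝ) + 1) := by positivity
        linarith
    rw [hInter] at htend
    refine ge_of_tendsto htend (Filter.Eventually.of_forall fun k => ?_)
    refine hupper _ ?_
    have : (0:ℝ) < 1 / ((k:ℝ)+1) := by positivity
    linarith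
  -- Step B: truncation
  set g : ℝ → ℝ := fun x => if |x| ≤ ζ then x ^ 2 else 0 with hgdef
  have hgm : Measurable g :=
    Measurable.ite (measurableSet_le measurable_abs measurable_const)
      (measurable_id.pow_const 2) measurable_const
  have hg_nonneg : ∀ x, 0 ≤ g x := by
    intro x; rw [hgdef]; dsimp only; split
    · exact sq_nonneg _
    · exact le_rfl
  have hg_le_sq : ∀ x, g x ≤ x ^ 2 := by
    intro x; rw [hgdef]; dsimp only; split
    · exact le_rfl
    · exact sq_nonneg _
  have hg_le : ∀ x, g x ≤ ζ ^ 2 := by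
    intro x; rw [hgdef]; dsimp only; split
    · rename_i h
      obtain ⟨h1, h2⟩ := abs_le.mp h
      nlinarith
    · positivity
  -- Step C: Chernoff bound for the truncated variables
  set μY : ℝ := ∫ ω, g (Z0 ω) ∂ℙ with hμYdef
  have hY0int : Integrable (fun ω => g (Z0 ω)) ℙ := by
    refine Integrable.mono' (integrable_const (ζ ^ 2))
      ((hgm.comp hZ0m).aestronglyMeasurable)
      (Filter.Eventually.of_forall fun ω => ?_)
    rw [Real.norm_eq_abs, abs_of_nonneg (hg_nonneg _)]
    exact hg_le _
  have hY0sqint : Integrable (fun ω => g (Z0 ω) ^ 2) ℙ := by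
    refine Integrable.mono' (integrable_const ((ζ ^ 2) ^ 2))
      (((hgm.comp hZ0m).pow_const 2).aestronglyMeasurable)
      (Filter.Eventually.of_forall fun ω => ?_)
    rw [Real.norm_eq_abs, abs_of_nonneg (sq_nonneg _)]
    exact pow_le_pow_left₀ (hg_nonneg _) (hg_le _) 2
  have hμhalf : (1 : ℝ) / 2 ≤ μY := by
    have hfun : (Set.indicator {ω | |Z0 ω| ≤ ζ} fun ω => Z0 ω ^ 2) =
        fun ω => g (Z0 ω) := by
      funext ω
      simp only [Set.indicator_apply, Set.mem_setOf_eq, hgdef]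
    rw [hμYdef, ← hfun,
      integral_indicator (measurableSet_le hZ0m.abs measurable_const)]
    exact hkey
  have hEY2 : ∫ ω, g (Z0 ω) ^ 2 ∂ℙ ≤ ζ ^ 2 * μY := by
    have hmono := integral_mono hY0sqint (hY0int.const_mul (ζ ^ 2))
      (fun ω => by nlinarith [hg_nonneg (Z0 ω), hg_le (Z0 ω)])
    rwa [integral_const_mul] at hmono
  set lam : ℝ := 1 / (2 * ζ ^ 2) with hlamdef
  have hlampos : 0 < lam := by rw [hlamdef]; positivity
  have hlamz : lam * ζ ^ 2 = 1 / 2 := by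
    rw [hlamdef]; field_simp
  -- per-variable mgf bound
  have hexp_int : ∀ i, Integrable (fun ω => Real.exp (-lam * g (Z i ω))) ℙ := by
    intro i
    refine Integrable.mono' (integrable_const 1)
      (((hgm.comp (hmeas i)).const_mul (-lam)).exp.aestronglyMeasurable)
      (Filter.Eventually.of_forall fun ω => ?_)
    rw [Real.norm_eq_abs, abs_of_nonneg (Real.exp_pos _).le]
    apply Real.exp_le_one_iff.mpr  -- maybe name differs
    have := hg_nonneg (Z i ω)
    nlinarith
  have hEexp : ∫ ω, Real.exp (-lam * g (Z0 ω)) ∂ℙ ≤ Real.exp (-(3 / 8) * lam) := by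
    have hInt2 : Integrable
        (fun ω => 1 - lam * g (Z0 ω) + lam ^ 2 * g (Z0 ω) ^ 2 / 2) ℙ :=
      ((integrable_const 1).sub (hY0int.const_mul lam)).add
        ((hY0sqint.const_mul (lam ^ 2)).div_const 2)
    have h1 : ∫ ω, Real.exp (-lam * g (Z0 ω)) ∂ℙ ≤
        ∫ ω, (1 - lam * g (Z0 ω) + lam ^ 2 * g (Z0 ω) ^ 2 / 2) ∂ℙ := by
      refine integral_mono (hexp_int ⟨0, hn⟩) hInt2 fun ω => ?_
      have h := exp_neg_le_quad (show 0 ≤ lam * g (Z0 ω) by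
        have := hg_nonneg (Z0 ω); positivity)
      rw [neg_mul]
      nlinarith [h]
    have h2 : ∫ ω, (1 - lam * g (Z0 ω) + lam ^ 2 * g (Z0 ω) ^ 2 / 2) ∂ℙ =
        1 - lam * μY + lam ^ 2 * (∫ ω, g (Z0 ω) ^ 2 ∂ℙ) / 2 := by
      have hA : Integrable (fun ω => 1 - lam * g (Z0 ω)) ℙ :=
        (integrable_const 1).sub (hY0int.const_mul lam)
      have hB : Integrable (fun ω => lam ^ 2 * g (Z0 ω) ^ 2 / 2) ℙ :=
        (hY0sqint.const_mul (lam ^ 2)).div_const 2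
      have hC : Integrable (fun ω => lam * g (Z0 ω)) ℙ := hY0int.const_mul lam
      rw [integral_add hA hB, integral_sub (integrable_const 1) hC,
        integral_div, integral_const_mul, integral_const_mul, integral_const]
      simp [hμYdef]
    have h3 : 1 - lam * μY + lam ^ 2 * (∫ ω, g (Z0 ω) ^ 2 ∂ℙ) / 2 ≤
        1 + (-(3 / 8) * lam) := by
      have hb : lam ^ 2 * (∫ ω, g (Z0 ω) ^ 2 ∂ℙ) / 2 ≤ lam ^ 2 * (ζ ^ 2 * μY) / 2 := by
        have : (0:ℝ) ≤ lam ^ 2 := sq_nonneg _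
        nlinarith [hEY2]
      have key : lam ^ 2 * (ζ ^ 2 * μY) / 2 = lam * μY / 4 := by
        have : lam ^ 2 * (ζ ^ 2 * μY) = lam * (lam * ζ ^ 2) * μY := by ring
        rw [this, hlamz]; ring
      rw [key] at hb
      nlinarith [hμhalf, hlampos]
    calc ∫ ω, Real.exp (-lam * g (Z0 ω)) ∂ℙ ≤ 1 + (-(3 / 8) * lam) := by
          rw [h2] at h1; linarith
      _ ≤ Real.exp (-(3 / 8) * lam) := by
          have := Real.add_one_le_exp (-(3 / 8) * lam); linarith
  -- identical distribution for the truncated exponentials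
  have hY_ident : ∀ i, ∫ ω, Real.exp (-lam * g (Z i ω)) ∂ℙ =
      ∫ ω, Real.exp (-lam * g (Z0 ω)) ∂ℙ := by
    intro i
    have hgl : Measurable fun x : ℝ => Real.exp (-lam * g x) :=
      (hgm.const_mul (-lam)).exp
    rw [← integral_map (hmeas i).aemeasurable hgl.aestronglyMeasurable, hident i,
      integral_map hZ0m.aemeasurable hgl.aestronglyMeasurable]
  -- independence of the truncated variables
  have hYm : ∀ i, Measurable (g ∘ Z i) := fun i => hgm.comp (hmeas i)
  have hYindep : iIndepFun (fun i => g ∘ Z i) ℙ :=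
    hindep.comp _ fun _ => hgm
  have hmgf_sum := hYindep.mgf_sum (t := -lam) hYm Finset.univ
  -- Chernoff
  have hsum_int : Integrable (fun ω => Real.exp (-lam * ∑ i, g (Z i ω))) ℙ := by
    refine Integrable.mono' (integrable_const 1)
      (((Finset.measurable_sum Finset.univ fun i _ =>
        (hgm.comp (hmeas i))).const_mul (-lam)).exp.aestronglyMeasurable)
      (Filter.Eventually.of_forall fun ω => ?_)
    rw [Real.norm_eq_abs, abs_of_nonneg (Real.exp_pos _).le]
    apply Real.exp_le_one_iff.mpr
    have : (0:ℝ) ≤ ∑ i, g (Z i ω) := Finset.sum_nonneg fun i _ => hg_nonneg _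
    nlinarith
  have hXeq : (fun ω => ∑ i, g (Z i ω)) = ∑ i : Fin n, g ∘ Z i := by
    funext ω
    simp [Finset.sum_apply]
  have hchern := measure_le_le_exp_mul_mgf (μ := ℙ)
    (X := fun ω => ∑ i, g (Z i ω)) ((n : ℝ) / 4) (neg_nonpos.mpr hlampos.le) hsum_int
  -- identify the mgf product
  have hm0 : mgf (fun ω => ∑ i, g (Z i ω)) ℙ (-lam) =
      (∫ ω, Real.exp (-lam * g (Z0 ω)) ∂ℙ) ^ n := by
    rw [hXeq, hmgf_sum]
    have : ∀ i : Fin n, mgf (g ∘ Z i) ℙ (-lam) = ∫ ω, Real.exp (-lam * g (Z0 ω)) ∂ℙ := by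
      intro i
      rw [mgf]
      exact hY_ident i
    rw [Finset.prod_congr rfl fun i _ => this i, Finset.prod_const, Finset.card_univ,
      Fintype.card_fin]
  have hm0nonneg : 0 ≤ ∫ ω, Real.exp (-lam * g (Z0 ω)) ∂ℙ :=
    integral_nonneg fun ω => (Real.exp_pos _).le
  have hreal : (ℙ {ω | ∑ i, g (Z i ω) ≤ (n : ℝ) / 4}).toReal ≤
      Real.exp (-(n : ℝ) / (32 * (ζ ^ 2 + ζ / 12))) := by
    refine hchern.trans ?_
    rw [hm0]
    calc Real.exp (-(-lam) * ((n : ℝ) / 4)) *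
          (∫ ω, Real.exp (-lam * g (Z0 ω)) ∂ℙ) ^ n
        ≤ Real.exp (-(-lam) * ((n : ℝ) / 4)) * Real.exp (-(3 / 8) * lam) ^ n := by
          apply mul_le_mul_of_nonneg_left _ (Real.exp_pos _).le
          exact pow_le_pow_left₀ hm0nonneg hEexp n
      _ = Real.exp (lam * ((n : ℝ) / 4) + (n : ℝ) * (-(3 / 8) * lam)) := by
          rw [← Real.exp_nat_mul, ← Real.exp_add, neg_neg]
      _ ≤ Real.exp (-(n : ℝ) / (32 * (ζ ^ 2 + ζ / 12))) := by
          apply Real.exp_le_exp.mpr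
          have hexp_eq : lam * ((n : ℝ) / 4) + (n : ℝ) * (-(3 / 8) * lam) =
              -((n : ℝ) / (8 * ζ ^ 2) / 2) := by
            rw [hlamdef]; field_simp; ring
          rw [hexp_eq]
          have hden : (0:ℝ) < 16 * ζ ^ 2 := by positivity
          have hden2 : (0:ℝ) < 32 * (ζ ^ 2 + ζ / 12) := by nlinarith
          have hdle : 16 * ζ ^ 2 ≤ 32 * (ζ ^ 2 + ζ / 12) := by nlinarith
          have h16 : (n : ℝ) / (8 * ζ ^ 2) / 2 = (n : ℝ) / (16 * ζ ^ 2) := by ring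
          rw [h16, neg_div]
          apply neg_le_neg
          exact div_le_div_of_nonneg_left (Nat.cast_nonneg n) hden hdle
  -- put everything together
  have hsub : {ω | ∑ i, (Z i ω) ^ 2 ≤ (n : ℝ) / 4} ⊆
      {ω | ∑ i, g (Z i ω) ≤ (n : ℝ) / 4} := fun ω hω =>
    le_trans (Finset.sum_le_sum fun i _ => hg_le_sq (Z i ω)) hω
  calc ℙ {ω | ∑ i, (Z i ω) ^ 2 ≤ (n : ℝ) / 4}
      ≤ ℙ {ω | ∑ i, g (Z i ω) ≤ (n : ℝ) / 4} := measure_mono hsub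
    _ ≤ ENNReal.ofReal (Real.exp (-(n : ℝ) / (32 * (ζ ^ 2 + ζ / 12)))) := by
        rw [← ENNReal.ofReal_toReal (measure_ne_top ℙ _)]
        exact ENNReal.ofReal_le_ofReal hreal
end

section
/- Let X be a random variable with E|X|^{1+δ} < ∞ for some δ ≥ 1, and let g(u) = E(|X|^{1+δ}·1{|X| ≥ u}). Define αₙ = g(n^{1/4})^{1/(2+δ)} ∨ n^{-1/4}. Then αₙ → 0 and g(αₙ√n)/αₙ^{1+δ} → 0 as n → ∞. -/
open MeasureTheory ProbabilityTheory Filter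

theorem stmt18 {Ω : Type*} [MeasureSpace Ω] [IsProbabilityMeasure (ℙ : Measure Ω)]
    (X : Ω → ℝ) (hX : Measurable X) (δ : ℝ) (hδ : 1 ≤ δ)
    (hint : Integrable (fun ω => |X ω| ^ (1 + δ)) ℙ)
    (g : ℝ → ℝ) (hg : g = fun u => ∫ (ω : Ω) in {ω : Ω | u ≤ |X ω|}, |X ω| ^ (1 + δ) ∂ℙ)
    (α : ℕ → ℝ)
    (hα : α = fun n : ℕ => max (g ((n : ℝ) ^ ((1 : ℝ) / 4)) ^ ((1 : ℝ) / (2 + δ)))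
      ((n : ℝ) ^ (-(1 : ℝ) / 4))) :
    Tendsto α atTop (nhds 0) ∧
      Tendsto (fun n : ℕ => g (α n * Real.sqrt n) / (α n) ^ (1 + δ)) atTop (nhds 0) := by
  have hδ2 : (0:ℝ) < 2 + δ := by linarith
  set c : ℝ := 1 / (2 + δ) with hc
  have hcpos : 0 < c := by positivity
  have habs : Measurable fun ω => |X ω| ^ (1 + δ) := ((Real.continuous_rpow_const (by linarith : (0:ℝ) ≤ 1 + δ)).measurable).comp hX.abs
  have hmeas : ∀ u : ℝ, MeasurableSet {ω | u ≤ |X ω|} := fun u =>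
    measurableSet_le measurable_const hX.abs
  have gnn : ∀ u, 0 ≤ g u := by
    intro u
    rw [hg]
    exact setIntegral_nonneg (hmeas u) fun ω _ => Real.rpow_nonneg (abs_nonneg _) _
  have gmono : ∀ u v : ℝ, u ≤ v → g v ≤ g u := by
    intro u v huv
    rw [hg]
    exact setIntegral_mono_set hint.integrableOn
      (Filter.Eventually.of_forall fun ω => Real.rpow_nonneg (abs_nonneg _) _)
      (HasSubset.Subset.eventuallyLE fun ω h => le_trans huv h)
  have gind : ∀ u : ℝ, g u =
      ∫ ω, Set.indicator {ω | u ≤ |X ω|} (fun ω => |X ω| ^ (1 + δ)) ω ∂ℙ := by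
    intro u; rw [hg]; exact (integral_indicator (hmeas u)).symm
  have gtends : Tendsto (fun n : ℕ => g ((n : ℝ) ^ ((1:ℝ)/4))) atTop (nhds 0) := by
    have h0 : (0:ℝ) = ∫ (_ : Ω), (0:ℝ) ∂ℙ := by simp
    rw [h0]
    simp only [gind]
    apply tendsto_integral_filter_of_dominated_convergence (fun ω => |X ω| ^ (1 + δ))
    · exact Eventually.of_forall fun n =>
        ((habs.indicator (hmeas _)).aestronglyMeasurable)
    · refine Eventually.of_forall fun n => Eventually.of_forall fun ω => ?_
      rw [Real.norm_eq_abs, abs_of_nonneg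
        (Set.indicator_nonneg (fun _ _ => Real.rpow_nonneg (abs_nonneg _) _) ω)]
      exact Set.indicator_le_self' (fun _ _ => Real.rpow_nonneg (abs_nonneg _) _) ω
    · exact hint
    · refine Eventually.of_forall fun ω => ?_
      have hpow : Tendsto (fun n : ℕ => (n : ℝ) ^ ((1:ℝ)/4)) atTop atTop :=
        (tendsto_rpow_atTop (by norm_num)).comp tendsto_natCast_atTop_atTop
      have hev : ∀ᶠ n : ℕ in atTop,
          Set.indicator {ω' | (n : ℝ) ^ ((1:ℝ)/4) ≤ |X ω'|}
            (fun ω' => |X ω'| ^ (1 + δ)) ω = 0 := by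
        filter_upwards [hpow.eventually_gt_atTop (|X ω|)] with n hn
        have hmem : ω ∉ {ω' | (n : ℝ) ^ ((1:ℝ)/4) ≤ |X ω'|} := not_le.mpr hn
        exact Set.indicator_of_notMem hmem _
      exact Tendsto.congr' (hev.mono fun n h => h.symm) tendsto_const_nhds
  have haTends : Tendsto (fun n : ℕ => g ((n : ℝ) ^ ((1:ℝ)/4)) ^ c) atTop (nhds 0) := by
    have hcont : ContinuousAt (fun x : ℝ => x ^ c) 0 :=
      Real.continuousAt_rpow_const 0 c (Or.inr hcpos.le)
    have := hcont.tendsto.comp gtends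
    simpa [Real.zero_rpow (ne_of_gt hcpos), Function.comp_def] using this
  have hbTends : Tendsto (fun n : ℕ => (n : ℝ) ^ (-(1:ℝ)/4)) atTop (nhds 0) := by
    have : Tendsto (fun x : ℝ => x ^ (-((1:ℝ)/4))) atTop (nhds 0) :=
      tendsto_rpow_neg_atTop (by norm_num)
    have h := this.comp tendsto_natCast_atTop_atTop
    simpa [neg_div, Function.comp_def] using h
  have hαTends : Tendsto α atTop (nhds 0) := by
    rw [hα]
    simpa using haTends.max hbTends
  refine ⟨hαTends, ?_⟩
  -- squeeze
  have key : ∀ n : ℕ, 1 ≤ n →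
      g (α n * Real.sqrt n) / (α n) ^ (1 + δ) ≤ g ((n : ℝ) ^ ((1:ℝ)/4)) ^ c := by
    intro n hn
    have hnpos : (0:ℝ) < n := by exact_mod_cast hn
    set G := g ((n : ℝ) ^ ((1:ℝ)/4)) with hG
    have hGnn : 0 ≤ G := gnn _
    have hbpos : (0:ℝ) < (n : ℝ) ^ (-(1:ℝ)/4) := Real.rpow_pos_of_pos hnpos _
    have hαge : (n : ℝ) ^ (-(1:ℝ)/4) ≤ α n := by rw [hα]; exact le_max_right _ _
    have hαpos : 0 < α n := lt_of_lt_of_le hbpos hαge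
    have hαgeG : G ^ c ≤ α n := by rw [hα]; exact le_max_left _ _
    -- α n * √n ≥ n^{1/4}
    have hsqrt : Real.sqrt n = (n : ℝ) ^ ((1:ℝ)/2) := Real.sqrt_eq_rpow _
    have hprod : (n : ℝ) ^ ((1:ℝ)/4) ≤ α n * Real.sqrt n := by
      have : (n : ℝ) ^ (-(1:ℝ)/4) * Real.sqrt n = (n : ℝ) ^ ((1:ℝ)/4) := by
        rw [hsqrt, ← Real.rpow_add hnpos]; norm_num
      rw [← this]
      exact mul_le_mul_of_nonneg_right hαge (Real.sqrt_nonneg _)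
    have hg1 : g (α n * Real.sqrt n) ≤ G := gmono _ _ hprod
    have hαpow : G ^ (c * (1 + δ)) ≤ (α n) ^ (1 + δ) := by
      calc G ^ (c * (1 + δ)) = (G ^ c) ^ (1 + δ) := Real.rpow_mul hGnn _ _
        _ ≤ (α n) ^ (1 + δ) :=
            Real.rpow_le_rpow (Real.rpow_nonneg hGnn _) hαgeG (by linarith)
    have hGcomb : G ^ c * G ^ (c * (1 + δ)) = G := by
      rw [← Real.rpow_add' hGnn (by positivity : (0:ℝ) < c + c * (1 + δ)).ne']
      have : c + c * (1 + δ) = 1 := by rw [hc]; field_simp; ring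
      rw [this, Real.rpow_one]
    rw [div_le_iff₀ (Real.rpow_pos_of_pos hαpos _)]
    calc g (α n * Real.sqrt n) ≤ G := hg1
      _ = G ^ c * G ^ (c * (1 + δ)) := hGcomb.symm
      _ ≤ G ^ c * (α n) ^ (1 + δ) :=
          mul_le_mul_of_nonneg_left hαpow (Real.rpow_nonneg hGnn _)
  have hnonneg : ∀ n : ℕ, 0 ≤ g (α n * Real.sqrt n) / (α n) ^ (1 + δ) := by
    intro n
    have hα0 : 0 ≤ α n := by
      rw [hα]
      exact le_trans (Real.rpow_nonneg (Nat.cast_nonneg n) _) (le_max_right _ _)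
    exact div_nonneg (gnn _) (Real.rpow_nonneg hα0 _)
  exact squeeze_zero' (Eventually.of_forall hnonneg)
    (eventually_atTop.mpr ⟨1, key⟩) haTends
end
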